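/- arXiv:1403.4407 — 3 statements merged into one kernel-verified Lean document; each statement's English description precedes it below -/
import Mathlib

section
/- Let D, E₁, E₂ be propositional formulas such that GL proves D ↔ [(E₁ ∧ ¬□(D → E₁)) ⊻ (E₂ ∧ ¬□(D ∧ ¬E₁ → E₂))], where ⊻ is exclusive disjunction. Then GL proves ¬D. -/
/-- Modal formulas. -/
inductive Fm : Type
  | atom : ℕ → Fm
  | bot : Fm
  | imp : Fm → Fm → Fm
  | box : Fm → Fm

namespace Fm

def neg (A : Fm) : Fm := imp A bot
def disj (A B : Fm) : Fm := imp (neg A) B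
def conj (A B : Fm) : Fm := neg (imp A (neg B))
def iff' (A B : Fm) : Fm := conj (imp A B) (imp B A)
/-- Exclusive disjunction. -/
def xor' (A B : Fm) : Fm := conj (disj A B) (neg (conj A B))

end Fm

open Fm

/-- Provability in the Gödel–Löb provability logic GLProv: normal modal logic
(propositional tautologies, axiom K, modus ponens, necessitation) together with
axiom 4 and the Löb axiom scheme `□(□A → A) → □A`. -/
inductive GLProv : Fm → Prop
  | ax1 (A B : Fm) : GLProv (imp A (imp B A))
  | ax2 (A B C : Fm) : GLProv (imp (imp A (imp B C)) (imp (imp A B) (imp A C)))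
  | ax3 (A B : Fm) : GLProv (imp (imp (neg A) (neg B)) (imp B A))
  | axK (A B : Fm) : GLProv (imp (box (imp A B)) (imp (box A) (box B)))
  | ax4 (A : Fm) : GLProv (imp (box A) (box (box A)))
  | lob (A : Fm) : GLProv (imp (box (imp (box A) A)) (box A))
  | mp {A B : Fm} : GLProv (imp A B) → GLProv A → GLProv B
  | nec {A : Fm} : GLProv A → GLProv (box A)

namespace STAux

/-- Derivability from a list of hypotheses (no necessitation under hypotheses). -/
inductive Der : List Fm → Fm → Prop
  | hyp {Γ A} : A ∈ Γ → Der Γ A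
  | thm {Γ A} : GLProv A → Der Γ A
  | mp {Γ A B} : Der Γ (imp A B) → Der Γ A → Der Γ B

theorem impSelf (A : Fm) : GLProv (imp A A) :=
  GLProv.mp (GLProv.mp (GLProv.ax2 A (imp A A) A) (GLProv.ax1 A (imp A A)))
    (GLProv.ax1 A A)

theorem deduction {Γ : List Fm} {A B : Fm} (h : Der (A :: Γ) B) : Der Γ (imp A B) := by
  induction h with
  | hyp hm =>
    rcases List.mem_cons.mp hm with h | h
    · subst h; exact Der.thm (impSelf _)
    · exact Der.mp (Der.thm (GLProv.ax1 _ _)) (Der.hyp h)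
  | thm h => exact Der.mp (Der.thm (GLProv.ax1 _ _)) (Der.thm h)
  | mp _ _ ih1 ih2 => exact Der.mp (Der.mp (Der.thm (GLProv.ax2 _ _ _)) ih1) ih2

theorem Der.weaken {Γ Δ : List Fm} {A : Fm} (h : Der Γ A) (hs : Γ ⊆ Δ) : Der Δ A := by
  induction h with
  | hyp hm => exact Der.hyp (hs hm)
  | thm h => exact Der.thm h
  | mp _ _ ih1 ih2 => exact Der.mp ih1 ih2

theorem Der.wk {Γ : List Fm} {A B : Fm} (h : Der Γ A) : Der (B :: Γ) A :=
  h.weaken (List.subset_cons_self _ _)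

theorem toGL {A : Fm} (h : Der [] A) : GLProv A := by
  generalize hΓ : ([] : List Fm) = Γ at h
  induction h with
  | hyp hm => subst hΓ; simp at hm
  | thm h => exact h
  | mp _ _ ih1 ih2 => exact GLProv.mp ih1 ih2

theorem Der.h0 {Γ : List Fm} {A : Fm} : Der (A :: Γ) A := Der.hyp (by simp)
theorem Der.h1 {Γ : List Fm} {A B : Fm} : Der (B :: A :: Γ) A := Der.hyp (by simp)

theorem botElim (A : Fm) : GLProv (imp bot A) :=
  GLProv.mp (GLProv.ax3 A bot)
    (GLProv.mp (GLProv.ax1 (neg bot) (neg A)) (impSelf bot))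

theorem Der.efq {Γ : List Fm} {A : Fm} (h : Der Γ bot) : Der Γ A :=
  Der.mp (Der.thm (botElim A)) h

/-- From `¬A` and `A`, `⊥`. (Note `neg A` is definitionally `imp A bot`.) -/
theorem notElim {Γ : List Fm} {A : Fm} (h1 : Der Γ (neg A)) (h2 : Der Γ A) :
    Der Γ bot := Der.mp h1 h2

theorem negnegIntro (A : Fm) : GLProv (imp A (neg (neg A))) :=
  toGL (deduction (deduction (notElim Der.h0 Der.h1)))

theorem dne {Γ : List Fm} {A : Fm} (h : Der Γ (neg (neg A))) : Der Γ A :=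
  Der.mp (Der.mp (Der.thm (GLProv.ax3 A (neg (neg A))))
    (Der.thm (negnegIntro (neg A)))) h

theorem byContra {Γ : List Fm} {A : Fm} (h : Der (neg A :: Γ) bot) : Der Γ A :=
  dne (deduction h)

theorem conjIntro {Γ : List Fm} {A B : Fm} (hA : Der Γ A) (hB : Der Γ B) :
    Der Γ (conj A B) :=
  deduction (notElim (Der.mp Der.h0 hA.wk) hB.wk)

theorem conjElim1 {Γ : List Fm} {A B : Fm} (h : Der Γ (conj A B)) : Der Γ A :=
  byContra (notElim h.wk (deduction (Der.efq (notElim Der.h1 Der.h0))))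

theorem conjElim2 {Γ : List Fm} {A B : Fm} (h : Der Γ (conj A B)) : Der Γ B :=
  byContra (notElim h.wk (deduction Der.h1))

end STAux

open STAux

/-- Fitch's self-referential two-day Surprise Test announcement is refutable in
GL: if `D ↔ [(E₁ ∧ ¬□(D → E₁)) ⊻ (E₂ ∧ ¬□(D ∧ ¬E₁ → E₂))]` is provable in GL,
then GL proves `¬D`. -/
theorem surprise_test_fitch_refutable (D E₁ E₂ : Fm)
    (h : GLProv (iff' D (xor' (conj E₁ (neg (box (imp D E₁))))
        (conj E₂ (neg (box (imp (conj D (neg E₁)) E₂))))))) :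
    GLProv (neg D) := by
  set S₁ := conj E₁ (neg (box (imp D E₁))) with hS₁
  set S₂ := conj E₂ (neg (box (imp (conj D (neg E₁)) E₂))) with hS₂
  -- forward direction of the fixed point, usable in any context
  have fwd : ∀ Γ : List Fm, Der Γ (imp D (xor' S₁ S₂)) :=
    fun Γ => conjElim1 (Der.thm h)
  -- Step A: ⊢ D ∧ ¬E₁ → E₂
  have hX : GLProv (imp (conj D (neg E₁)) E₂) := by
    apply toGL; apply deduction
    have hD : Der [conj D (neg E₁)] D := conjElim1 Der.h0
    have hnE1 : Der [conj D (neg E₁)] (neg E₁) := conjElim2 Der.h0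
    have dsj : Der [conj D (neg E₁)] (disj S₁ S₂) :=
      conjElim1 (Der.mp (fwd _) hD)
    have nS1 : Der [conj D (neg E₁)] (neg S₁) :=
      deduction (notElim hnE1.wk (conjElim1 Der.h0))
    exact conjElim1 (Der.mp dsj nS1)
  have hBX : GLProv (box (imp (conj D (neg E₁)) E₂)) := GLProv.nec hX
  -- ⊢ ¬S₂
  have nS2 : GLProv (neg S₂) :=
    toGL (deduction (notElim (conjElim2 Der.h0) (Der.thm hBX)))
  -- Step B: ⊢ D → E₁
  have hF : GLProv (imp D E₁) := by
    apply toGL; apply deduction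
    have dsj : Der [D] (disj S₁ S₂) := conjElim1 (Der.mp (fwd _) Der.h0)
    have hS1d : Der [D] S₁ :=
      byContra (notElim (Der.thm nS2) (Der.mp dsj.wk Der.h0))
    exact conjElim1 hS1d
  have hBF : GLProv (box (imp D E₁)) := GLProv.nec hF
  -- ⊢ ¬S₁
  have nS1 : GLProv (neg S₁) :=
    toGL (deduction (notElim (conjElim2 Der.h0) (Der.thm hBF)))
  -- Step C: ⊢ ¬D
  apply toGL; apply deduction
  have dsj : Der [D] (disj S₁ S₂) := conjElim1 (Der.mp (fwd _) Der.h0)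
  exact notElim (Der.thm nS2) (Der.mp dsj (Der.thm nS1))
end

section
/- Let D, E₁, E₂ be propositional formulas such that GL proves D ↔ [(E₁ ∧ ¬□(D → E₁)) ⊻ (E₂ ∧ ¬□(D → E₂))]. Then GL proves ¬D. -/
open Fm

/-- Deduction from a list of hypotheses, using GL theorems and modus ponens. -/
inductive Ded : List Fm → Fm → Prop
  | hyp {Γ A} : A ∈ Γ → Ded Γ A
  | thm {Γ A} : GLProv A → Ded Γ A
  | mp {Γ A B} : Ded Γ (imp A B) → Ded Γ A → Ded Γ B

theorem GLProv.id' (A : Fm) : GLProv (imp A A) :=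
  .mp (.mp (.ax2 A (imp A A) A) (.ax1 A (imp A A))) (.ax1 A A)

theorem GLProv.efq (A : Fm) : GLProv (imp bot A) :=
  .mp (.ax3 A bot) (.mp (.ax1 (neg bot) (neg A)) (GLProv.id' bot))

theorem Ded.weaken {Γ Γ' A} (h : Ded Γ A) (hs : Γ ⊆ Γ') : Ded Γ' A := by
  induction h with
  | hyp hm => exact .hyp (hs hm)
  | thm ht => exact .thm ht
  | mp _ _ ih1 ih2 => exact .mp ih1 ih2

theorem Ded.dt {Γ A B} (h : Ded (A :: Γ) B) : Ded Γ (imp A B) := by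
  induction h with
  | hyp hm =>
    rcases List.mem_cons.mp hm with rfl | hm
    · exact .thm (GLProv.id' _)
    · exact .mp (.thm (.ax1 _ _)) (.hyp hm)
  | thm ht => exact .mp (.thm (.ax1 _ _)) (.thm ht)
  | mp _ _ ih1 ih2 => exact .mp (.mp (.thm (.ax2 _ _ _)) ih1) ih2

theorem Ded.toGL {A} (h : Ded [] A) : GLProv A := by
  induction h with
  | hyp hm => simp at hm
  | thm ht => exact ht
  | mp _ _ ih1 ih2 => exact .mp ih1 ih2

theorem Ded.efq {Γ A} (h : Ded Γ bot) : Ded Γ A := .mp (.thm (GLProv.efq A)) h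

/-- double negation introduction -/
theorem GLProv.dni (A : Fm) : GLProv (imp A (neg (neg A))) :=
  Ded.toGL <| Ded.dt <| Ded.dt <|
    Ded.mp (.hyp (show neg A ∈ [neg A, A] by simp)) (.hyp (show A ∈ [neg A, A] by simp))

/-- double negation elimination -/
theorem Ded.dne {Γ A} (h : Ded Γ (neg (neg A))) : Ded Γ A :=
  .mp (.mp (.thm (.ax3 A (neg (neg A)))) (.thm (GLProv.dni (neg A)))) h

theorem Ded.conj_left {Γ X Y} (h : Ded Γ (conj X Y)) : Ded Γ X := by
  apply Ded.dne
  apply Ded.dt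
  refine Ded.mp (h.weaken (List.subset_cons_self _ _)) ?_
  apply Ded.dt
  exact Ded.efq <| Ded.mp (.hyp (show neg X ∈ [X, neg X] ++ Γ by simp))
    (.hyp (show X ∈ [X, neg X] ++ Γ by simp))

theorem Ded.conj_right {Γ X Y} (h : Ded Γ (conj X Y)) : Ded Γ Y := by
  apply Ded.dne
  apply Ded.dt
  refine Ded.mp (h.weaken (List.subset_cons_self _ _)) ?_
  exact Ded.mp (.thm (.ax1 (neg Y) X)) (.hyp (show neg Y ∈ neg Y :: Γ by simp))
/-- `⊢ ¬D → (D → E)` -/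
theorem GLProv.neg_imp (D E : Fm) : GLProv (imp (neg D) (imp D E)) :=
  Ded.toGL <| Ded.dt <| Ded.dt <| Ded.efq <|
    Ded.mp (.hyp (show neg D ∈ [D, neg D] by simp)) (.hyp (show D ∈ [D, neg D] by simp))

/-- `⊢ P → ¬(E ∧ ¬P)` -/
theorem GLProv.key (P E : Fm) : GLProv (imp P (neg (conj E (neg P)))) := by
  apply Ded.toGL; apply Ded.dt; apply Ded.dt
  -- Γ = [conj E (neg P), P] ⊢ bot
  refine Ded.mp (.hyp (show conj E (neg P) ∈ [conj E (neg P), P] by simp)) ?_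
  -- ⊢ imp E (neg (neg P))
  apply Ded.dt; apply Ded.dt
  exact Ded.mp (.hyp (show neg P ∈ [neg P, E, conj E (neg P), P] by simp))
    (.hyp (show P ∈ [neg P, E, conj E (neg P), P] by simp))

/-- Kripke's refutation of Fitch's attempted resolution of the Surprise Test
Paradox: if `D ↔ [(E₁ ∧ ¬□(D → E₁)) ⊻ (E₂ ∧ ¬□(D → E₂))]` is provable in GL,
then GL proves `¬D`. -/
theorem surprise_test_kripke_refutable (D E₁ E₂ : Fm)
    (h : GLProv (iff' D (xor' (conj E₁ (neg (box (imp D E₁))))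
        (conj E₂ (neg (box (imp D E₂))))))) :
    GLProv (neg D) := by
  set P₁ := box (imp D E₁) with hP₁
  set P₂ := box (imp D E₂) with hP₂
  set C₁ := conj E₁ (neg P₁) with hC₁
  set C₂ := conj E₂ (neg P₂) with hC₂
  set X := xor' C₁ C₂ with hX
  -- □¬D → Pᵢ
  have a₁ : GLProv (imp (box (neg D)) P₁) :=
    .mp (.axK (neg D) (imp D E₁)) (.nec (GLProv.neg_imp D E₁))
  have a₂ : GLProv (imp (box (neg D)) P₂) :=
    .mp (.axK (neg D) (imp D E₂)) (.nec (GLProv.neg_imp D E₂))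
  -- □¬D → ¬D
  have step : GLProv (imp (box (neg D)) (neg D)) := by
    apply Ded.toGL; apply Ded.dt
    set Γ : List Fm := [box (neg D)] with hΓ
    have hbox : Ded Γ (box (neg D)) := .hyp (by simp [hΓ])
    have nc₁ : Ded Γ (neg C₁) := .mp (.thm (GLProv.key P₁ E₁)) (.mp (.thm a₁) hbox)
    have nc₂ : Ded Γ (neg C₂) := .mp (.thm (GLProv.key P₂ E₂)) (.mp (.thm a₂) hbox)
    -- ¬X
    have nX : Ded Γ (neg X) := by
      apply Ded.dt
      have hx : Ded (X :: Γ) X := .hyp (by simp)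
      have hdisj : Ded (X :: Γ) (disj C₁ C₂) := hx.conj_left
      have hc₂ : Ded (X :: Γ) C₂ :=
        .mp hdisj (nc₁.weaken (List.subset_cons_self _ _))
      exact .mp (nc₂.weaken (List.subset_cons_self _ _)) hc₂
    -- D → X  from h, hence ¬D
    have hDX : Ded Γ (imp D X) := (Ded.thm h).conj_left
    apply Ded.dt
    exact Ded.mp (nX.weaken (List.subset_cons_self _ _))
      (.mp (hDX.weaken (List.subset_cons_self _ _)) (.hyp (by simp)))
  have := GLProv.mp (.lob (neg D)) (.nec step)
  exact .mp step this
end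

section
/- Let D, E₁, E₂ be propositional formulas such that GL proves D ↔ [□D → ((E₁ ∧ ¬□(D → E₁)) ⊻ (E₂ ∧ ¬□(D ∧ ¬E₁ → E₂)))]. Then GL proves D ↔ ¬□D, and consequently GL does not prove D (assuming GL is consistent). -/
open Fm

deriving instance DecidableEq for Fm

namespace GLKit
open Fm

theorem idF (A : Fm) : GLProv (imp A A) :=
  GLProv.mp (GLProv.mp (GLProv.ax2 A (imp A A) A) (GLProv.ax1 A (imp A A))) (GLProv.ax1 A A)

theorem mono {P Q : Fm} (x : Fm) (h : GLProv (imp P Q)) :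
    GLProv (imp (imp x P) (imp x Q)) :=
  GLProv.mp (GLProv.ax2 x P Q) (GLProv.mp (GLProv.ax1 (imp P Q) x) h)

theorem transF {A B C : Fm} (h1 : GLProv (imp A B)) (h2 : GLProv (imp B C)) :
    GLProv (imp A C) :=
  GLProv.mp (mono A h2) h1

/-- Provability from a list of hypotheses (nested implications). -/
def Pr (Γ : List Fm) (A : Fm) : Prop := GLProv (Γ.foldr imp A)

theorem impCtx (Γ : List Fm) (A B : Fm) :
    GLProv (imp (Γ.foldr imp (imp A B)) (imp (Γ.foldr imp A) (Γ.foldr imp B))) := by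
  induction Γ with
  | nil => exact idF (imp A B)
  | cons x Γ ih => exact transF (mono x ih) (GLProv.ax2 x (List.foldr imp A Γ) (List.foldr imp B Γ))

theorem Pr.mp {Γ : List Fm} {A B : Fm} (h1 : Pr Γ (imp A B)) (h2 : Pr Γ A) : Pr Γ B :=
  GLProv.mp (GLProv.mp (impCtx Γ A B) h1) h2

theorem Pr.ofGL {Γ : List Fm} {A : Fm} (h : GLProv A) : Pr Γ A := by
  induction Γ with
  | nil => exact h
  | cons x Γ ih => exact GLProv.mp (GLProv.ax1 _ x) ih

theorem toCtx (Γ : List Fm) (A : Fm) : GLProv (imp A (Γ.foldr imp A)) := by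
  induction Γ with
  | nil => exact idF A
  | cons x Γ ih => exact transF ih (GLProv.ax1 (List.foldr imp A Γ) x)

theorem Pr.hyp {Γ : List Fm} {A : Fm} (h : A ∈ Γ) : Pr Γ A := by
  induction Γ with
  | nil => simp at h
  | cons x Γ ih =>
    rcases List.mem_cons.mp h with h | h
    · subst h; exact toCtx Γ A
    · exact GLProv.mp (GLProv.ax1 _ x) (ih h)

theorem Pr.detach {Γ' : List Fm} {A : Fm} :
    ∀ {Γ : List Fm}, Pr Γ' (Γ.foldr imp A) → (∀ y ∈ Γ, Pr Γ' y) → Pr Γ' A := by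
  intro Γ
  induction Γ with
  | nil => intro h _; exact h
  | cons x Γ ih =>
    intro h hy
    exact ih (Pr.mp h (hy x (by simp))) (fun y m => hy y (by simp [m]))

theorem Pr.subset {Γ Γ' : List Fm} {A : Fm} (h : Pr Γ A) (hs : ∀ y ∈ Γ, y ∈ Γ') :
    Pr Γ' A :=
  Pr.detach (Pr.ofGL h) (fun y m => Pr.hyp (hs y m))

theorem exfalsoF (A : Fm) : GLProv (imp bot A) :=
  GLProv.mp (GLProv.ax3 A bot)
    (GLProv.mp (GLProv.ax1 (imp bot bot) (neg A)) (idF bot))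

theorem dni (A : Fm) : GLProv (imp A (neg (neg A))) := by
  have : Pr [A, neg A] bot :=
    Pr.mp (Pr.hyp (show neg A ∈ [A, neg A] by simp))
      (Pr.hyp (show A ∈ [A, neg A] by simp))
  exact this

theorem dne (A : Fm) : GLProv (imp (neg (neg A)) A) :=
  GLProv.mp (GLProv.ax3 A (neg (neg A))) (dni (neg A))

theorem impOfNeg (A B : Fm) : GLProv (imp (neg A) (imp A B)) := by
  have : Pr [neg A, A] B :=
    Pr.mp (Pr.ofGL (exfalsoF B))
      (Pr.mp (Pr.hyp (show neg A ∈ [neg A, A] by simp))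
        (Pr.hyp (show A ∈ [neg A, A] by simp)))
  exact this

theorem negImpIntro (A B : Fm) : GLProv (imp A (imp (neg B) (neg (imp A B)))) := by
  have : Pr [A, neg B, imp A B] bot :=
    Pr.mp (Pr.hyp (show neg B ∈ [A, neg B, imp A B] by simp))
      (Pr.mp (Pr.hyp (show imp A B ∈ [A, neg B, imp A B] by simp))
        (Pr.hyp (show A ∈ [A, neg B, imp A B] by simp)))
  exact this

theorem contraposeF (A B : Fm) : GLProv (imp (imp A B) (imp (neg B) (neg A))) := by
  have : Pr [imp A B, neg B, A] bot :=
    Pr.mp (Pr.hyp (show neg B ∈ [imp A B, neg B, A] by simp))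
      (Pr.mp (Pr.hyp (show imp A B ∈ [imp A B, neg B, A] by simp))
        (Pr.hyp (show A ∈ [imp A B, neg B, A] by simp)))
  exact this

theorem caseElim {p C : Fm} (h1 : GLProv (imp p C)) (h2 : GLProv (imp (neg p) C)) :
    GLProv C := by
  have n1 : GLProv (imp (neg C) (neg p)) := GLProv.mp (contraposeF p C) h1
  have n2 : GLProv (imp (neg C) (neg (neg p))) := GLProv.mp (contraposeF (neg p) C) h2
  have hb : Pr [neg C] bot :=
    Pr.mp (Pr.mp (Pr.ofGL n2) (Pr.hyp (show neg C ∈ [neg C] by simp)))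
      (Pr.mp (Pr.ofGL n1) (Pr.hyp (show neg C ∈ [neg C] by simp)))
  exact GLProv.mp (dne C) hb

/-- Boolean evaluation, treating boxed formulas as atoms. -/
def evalF (v : Fm → Bool) : Fm → Bool
  | atom n => v (atom n)
  | bot => false
  | imp A B => !evalF v A || evalF v B
  | box A => v (box A)

def atomsF : Fm → List Fm
  | atom n => [atom n]
  | bot => []
  | imp A B => atomsF A ++ atomsF B
  | box A => [box A]

def litF (v : Fm → Bool) (p : Fm) : Fm := if v p then p else neg p

theorem kalmar (A : Fm) (v : Fm → Bool) :
    Pr ((atomsF A).map (litF v)) (if evalF v A then A else neg A) := by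
  induction A with
  | atom n =>
    cases hv : v (atom n) <;>
      simp only [atomsF, List.map, litF, evalF, hv, if_true, if_false] <;> exact idF _
  | bot => exact idF bot
  | box A ih =>
    cases hv : v (box A) <;>
      simp only [atomsF, List.map, litF, evalF, hv, if_true, if_false] <;> exact idF _
  | imp A B ihA ihB =>
    have hsA : ∀ y ∈ (atomsF A).map (litF v), y ∈ (atomsF (imp A B)).map (litF v) := by
      intro y hy; simp only [atomsF, List.map_append, List.mem_append]; exact Or.inl hy
    have hsB : ∀ y ∈ (atomsF B).map (litF v), y ∈ (atomsF (imp A B)).map (litF v) := by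
      intro y hy; simp only [atomsF, List.map_append, List.mem_append]; exact Or.inr hy
    have PA := ihA.subset hsA
    have PB := ihB.subset hsB
    cases hA : evalF v A <;> cases hB : evalF v B <;>
      rw [hA] at PA <;> rw [hB] at PB <;>
      simp only [evalF, hA, hB, Bool.not_true, Bool.not_false, Bool.false_or,
        Bool.true_or, Bool.or_true, Bool.or_false, if_true, if_false]
    · exact Pr.mp (Pr.ofGL (impOfNeg A B)) PA
    · exact Pr.mp (Pr.ofGL (impOfNeg A B)) PA
    · exact Pr.mp (Pr.mp (Pr.ofGL (negImpIntro A B)) PA) PB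
    · exact Pr.mp (Pr.ofGL (GLProv.ax1 B A)) PB

theorem elimAtoms (A : Fm) : ∀ L : List Fm, L.Nodup →
    (∀ v : Fm → Bool, Pr (L.map (litF v)) A) → GLProv A := by
  intro L
  induction L with
  | nil => intro _ h; exact h (fun _ => true)
  | cons p L ih =>
    intro hnd h
    refine ih (List.Nodup.of_cons hnd) ?_
    intro v
    have hp : p ∉ L := (List.nodup_cons.mp hnd).1
    have e1 : List.map (litF (fun q => if q = p then true else v q)) L
        = List.map (litF v) L := by
      apply List.map_congr_left
      intro q hq
      have : ¬ q = p := fun hqp => hp (hqp ▸ hq)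
      simp [litF, this]
    have e2 : List.map (litF (fun q => if q = p then false else v q)) L
        = List.map (litF v) L := by
      apply List.map_congr_left
      intro q hq
      have : ¬ q = p := fun hqp => hp (hqp ▸ hq)
      simp [litF, this]
    have h1 := h (fun q => if q = p then true else v q)
    have h2 := h (fun q => if q = p then false else v q)
    simp only [List.map, e1, e2, litF, if_pos rfl] at h1 h2
    exact caseElim h1 h2

theorem taut (A : Fm) (h : ∀ v : Fm → Bool, evalF v A = true) : GLProv A := by
  refine elimAtoms A (atomsF A).dedup (List.nodup_dedup _) ?_
  intro v
  have k := kalmar A v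
  rw [h v, if_pos rfl] at k
  refine k.subset ?_
  intro y hy
  simp only [List.mem_map] at hy ⊢
  obtain ⟨q, hq, rfl⟩ := hy
  exact ⟨q, List.mem_dedup.mpr hq, rfl⟩

end GLKit

/-- Fitch's Gödelian version of the Surprise Test announcement: if
`D ↔ [□D → ((E₁ ∧ ¬□(D → E₁)) ⊻ (E₂ ∧ ¬□(D ∧ ¬E₁ → E₂)))]` is provable in GL,
then GL proves `D ↔ ¬□D`; consequently, if GL is consistent then GL does not
prove `D`. -/
theorem surprise_test_goedel_sentence (D E₁ E₂ : Fm)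
    (h : GLProv (iff' D (imp (box D) (xor' (conj E₁ (neg (box (imp D E₁))))
        (conj E₂ (neg (box (imp (conj D (neg E₁)) E₂)))))))) :
    GLProv (iff' D (neg (box D))) ∧ (¬ GLProv bot → ¬ GLProv D) := by
  open GLKit in
  have P1 : GLProv (imp (box D) (imp (conj D (neg E₁)) E₂)) := by
    refine GLProv.mp (taut _ ?_) h
    intro v
    cases h1 : evalF v D <;> cases h2 : evalF v E₁ <;> cases h3 : evalF v E₂ <;>
      cases h4 : v (box D) <;> cases h5 : v (box (imp D E₁)) <;>
      cases h6 : v (box (imp (conj D (neg E₁)) E₂)) <;>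
      simp_all [iff', xor', conj, disj, neg, evalF]
  have P2 : GLProv (imp (box D) (box (imp (conj D (neg E₁)) E₂))) :=
    transF (GLProv.ax4 D) (GLProv.mp (GLProv.axK (box D) _) (GLProv.nec P1))
  have P3 : GLProv (imp (box D) (imp D E₁)) := by
    refine GLProv.mp (GLProv.mp (taut _ ?_) h) P2
    intro v
    cases h1 : evalF v D <;> cases h2 : evalF v E₁ <;> cases h3 : evalF v E₂ <;>
      cases h4 : v (box D) <;> cases h5 : v (box (imp D E₁)) <;>
      cases h6 : v (box (imp (conj D (neg E₁)) E₂)) <;>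
      simp_all [iff', xor', conj, disj, neg, evalF]
  have P4 : GLProv (imp (box D) (box (imp D E₁))) :=
    transF (GLProv.ax4 D) (GLProv.mp (GLProv.axK (box D) _) (GLProv.nec P3))
  have G : GLProv (iff' D (neg (box D))) := by
    refine GLProv.mp (GLProv.mp (GLProv.mp (taut _ ?_) h) P2) P4
    intro v
    cases h1 : evalF v D <;> cases h2 : evalF v E₁ <;> cases h3 : evalF v E₂ <;>
      cases h4 : v (box D) <;> cases h5 : v (box (imp D E₁)) <;>
      cases h6 : v (box (imp (conj D (neg E₁)) E₂)) <;>
      simp_all [iff', xor', conj, disj, neg, evalF]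
  refine ⟨G, fun hcon hD => hcon ?_⟩
  have hnb : GLProv (neg (box D)) := by
    refine GLProv.mp (GLProv.mp (taut _ ?_) G) hD
    intro v
    cases h1 : evalF v D <;> cases h4 : v (box D) <;>
      simp_all [iff', conj, neg, evalF]
  exact GLProv.mp hnb (GLProv.nec hD)
end
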